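/- Let X ∈ ℝ^{n×d} be full rank (n ≥ d) and d ≤ s ≤ n. If S is drawn by size-s volume sampling over X (P(S) ∝ det(X_S^⊤X_S)), then E[(I_S X)^+] = X^+, where I_S is the diagonal 0/1 matrix selecting the rows of S, and M^+ denotes the Moore–Penrose pseudoinverse. -/

import Mathlib

open Matrix Finset

noncomputable section

/-- The submatrix of `X` consisting of the rows indexed by the subset `S`. -/
def rowSub {n d : ℕ} (X : Matrix (Fin n) (Fin d) ℝ) (S : Finset (Fin n)) :
    Matrix {i // i ∈ S} (Fin d) ℝ :=
  X.submatrix (fun i => (i : Fin n)) id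

/-- `X_S^⊤ X_S`. -/
def gram {n d : ℕ} (X : Matrix (Fin n) (Fin d) ℝ) (S : Finset (Fin n)) :
    Matrix (Fin d) (Fin d) ℝ :=
  (rowSub X S)ᵀ * rowSub X S

/-- The four Penrose conditions characterizing the Moore–Penrose pseudoinverse. -/
def IsMoorePenrose {m p : Type*} [Fintype m] [Fintype p]
    (A : Matrix m p ℝ) (B : Matrix p m ℝ) : Prop :=
  A * B * A = A ∧ B * A * B = B ∧ (A * B)ᵀ = A * B ∧ (B * A)ᵀ = B * A

/-- The Moore–Penrose pseudoinverse `A⁺` of a real matrix. -/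
def pinv {m p : Type*} [Fintype m] [Fintype p] (A : Matrix m p ℝ) : Matrix p m ℝ := by
  classical exact if h : ∃ B, IsMoorePenrose A B then h.choose else 0

/-- The diagonal 0/1 selection matrix `I_S`. -/
def sel {n : ℕ} (S : Finset (Fin n)) : Matrix (Fin n) (Fin n) ℝ :=
  Matrix.diagonal (fun i => if i ∈ S then 1 else 0)

lemma mp_unique {m p : Type*} [Fintype m] [Fintype p]
    {A : Matrix m p ℝ} {B C : Matrix p m ℝ}
    (hB : IsMoorePenrose A B) (hC : IsMoorePenrose A C) : B = C := by
  obtain ⟨hB1, hB2, hB3, hB4⟩ := hB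
  obtain ⟨hC1, hC2, hC3, hC4⟩ := hC
  have hAB : A * B = A * C := by
    calc A * B = (A * B)ᵀ := hB3.symm
    _ = ((A * C * A) * B)ᵀ := by rw [hC1]
    _ = ((A * C) * (A * B))ᵀ := by rw [Matrix.mul_assoc]
    _ = (A * B)ᵀ * (A * C)ᵀ := transpose_mul _ _
    _ = (A * B) * (A * C) := by rw [hB3, hC3]
    _ = (A * B * A) * C := by rw [Matrix.mul_assoc (A * B) A C]
    _ = A * C := by rw [hB1]
  have hBA : B * A = C * A := by
    calc B * A = (B * A)ᵀ := hB4.symm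
    _ = (B * (A * C * A))ᵀ := by rw [hC1]
    _ = ((B * A) * (C * A))ᵀ := by
        rw [← Matrix.mul_assoc, ← Matrix.mul_assoc, Matrix.mul_assoc (B * A)]
    _ = (C * A)ᵀ * (B * A)ᵀ := transpose_mul _ _
    _ = (C * A) * (B * A) := by rw [hC4, hB4]
    _ = C * ((A * B) * A) := by rw [Matrix.mul_assoc, ← Matrix.mul_assoc A B A]
    _ = C * A := by rw [hB1]
  calc B = B * A * B := hB2.symm
  _ = B * (A * C) := by rw [Matrix.mul_assoc, hAB]
  _ = (C * A) * C := by rw [← Matrix.mul_assoc, hBA]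
  _ = C := hC2

lemma pinv_eq {m p : Type*} [Fintype m] [Fintype p]
    {A : Matrix m p ℝ} {B : Matrix p m ℝ} (h : IsMoorePenrose A B) : pinv A = B := by
  have hex : ∃ B, IsMoorePenrose A B := ⟨B, h⟩
  unfold pinv
  rw [dif_pos hex]
  exact mp_unique hex.choose_spec h

lemma mp_full_rank {m p : Type*} [Fintype m] [Fintype p] [DecidableEq p]
    (A : Matrix m p ℝ) (h : IsUnit (Aᵀ * A)) : IsMoorePenrose A ((Aᵀ * A)⁻¹ * Aᵀ) := by
  have hdet : IsUnit (Aᵀ * A).det := (isUnit_iff_isUnit_det _).1 h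
  have hinv : (Aᵀ * A)⁻¹ * (Aᵀ * A) = 1 := nonsing_inv_mul _ hdet
  have hBA : ((Aᵀ * A)⁻¹ * Aᵀ) * A = 1 := by rw [Matrix.mul_assoc]; exact hinv
  have hT : ((Aᵀ * A)⁻¹)ᵀ = (Aᵀ * A)⁻¹ := by
    rw [transpose_nonsing_inv, transpose_mul, transpose_transpose]
  refine ⟨?_, ?_, ?_, ?_⟩
  · rw [Matrix.mul_assoc, hBA, Matrix.mul_one]
  · rw [hBA, Matrix.one_mul]
  · rw [← Matrix.mul_assoc, transpose_mul, transpose_mul, hT, transpose_transpose,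
      Matrix.mul_assoc]
  · rw [hBA, transpose_one]


lemma sel_transpose {n : ℕ} (S : Finset (Fin n)) : (sel S)ᵀ = sel S :=
  diagonal_transpose _

lemma sel_mul_self {n : ℕ} (S : Finset (Fin n)) : sel S * sel S = sel S := by
  have h : (fun i => (if i ∈ S then (1:ℝ) else 0) * (if i ∈ S then 1 else 0))
      = fun i => if i ∈ S then (1:ℝ) else 0 := by
    funext i; by_cases h : i ∈ S <;> simp [h]
  rw [sel, diagonal_mul_diagonal, h]

lemma gram_eq {n d : ℕ} (X : Matrix (Fin n) (Fin d) ℝ) (S : Finset (Fin n)) :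
    gram X S = Xᵀ * sel S * X := by
  ext k l
  rw [Matrix.mul_assoc]
  simp only [_root_.gram, rowSub, Matrix.mul_apply, transpose_apply, submatrix_apply, id_eq,
    sel, diagonal_mul]
  rw [Finset.sum_coe_sort S (fun i => X i k * X i l)]
  simp only [diagonal_apply, ite_mul, zero_mul, Finset.sum_ite_eq, Finset.mem_univ,
    if_true, one_mul, mul_ite, mul_zero]
  rw [Finset.sum_ite_mem, Finset.univ_inter]

lemma eq_zero_of_mul_transpose_self {m p : Type*} [Fintype m] [Fintype p]
    {M : Matrix m p ℝ} (h : M * Mᵀ = 0) : M = 0 := by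
  ext i j
  have hi : (M * Mᵀ) i i = 0 := by rw [h]; rfl
  rw [Matrix.mul_apply] at hi
  simp only [transpose_apply] at hi
  have := (Finset.sum_eq_zero_iff_of_nonneg (fun k _ => mul_self_nonneg (M i k))).1 hi
  have h2 := this j (Finset.mem_univ j)
  have := mul_self_eq_zero.1 h2
  simpa using this

lemma isUnit_of_rank_eq_card {d : ℕ} (A : Matrix (Fin d) (Fin d) ℝ) (h : A.rank = d) :
    IsUnit A := by
  rw [← Matrix.mulVec_surjective_iff_isUnit]
  have hr : LinearMap.range A.mulVecLin = ⊤ := by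
    apply Submodule.eq_top_of_finrank_eq
    rw [← Matrix.rank, h, Module.finrank_pi]
    simp
  intro y
  have := LinearMap.range_eq_top.mp hr y
  obtain ⟨x, hx⟩ := this
  exact ⟨x, hx⟩

lemma det_expand {n d : ℕ} (D : Fin n → ℝ) (X Y : Matrix (Fin n) (Fin d) ℝ) :
    (Xᵀ * Matrix.diagonal D * Y).det
      = ∑ f : Fin d → Fin n, (∏ k, X (f k) k * D (f k)) * (Y.submatrix f id).det := by
  have hM : (Xᵀ * Matrix.diagonal D * Y)
      = fun k => ∑ i, (X i k * D i) • (Y i : Fin d → ℝ) := by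
    funext k l
    rw [Matrix.mul_assoc]
    simp only [Matrix.mul_apply, transpose_apply, diagonal_apply, ite_mul, zero_mul,
      Finset.sum_ite_eq, Finset.mem_univ, if_true]
    simp only [Finset.sum_apply, Pi.smul_apply, smul_eq_mul]
    apply Finset.sum_congr rfl
    intro i _
    ring
  have hsub : ∀ r : Fin d → Fin n,
      Matrix.detRowAlternating.toMultilinearMap (fun k => (Y (r k) : Fin d → ℝ))
        = (Y.submatrix r id).det :=
    fun r => rfl
  calc (Xᵀ * Matrix.diagonal D * Y).det
      = Matrix.detRowAlternating.toMultilinearMap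
          (fun k => ∑ i, (X i k * D i) • (Y i : Fin d → ℝ)) := by
        rw [← hM]; rfl
    _ = ∑ r : Fin d → Fin n, Matrix.detRowAlternating.toMultilinearMap
          (fun k => (X (r k) k * D (r k)) • (Y (r k) : Fin d → ℝ)) :=
        Matrix.detRowAlternating.toMultilinearMap.map_sum
          (g := fun k i => (X i k * D i) • (Y i : Fin d → ℝ))
    _ = ∑ r : Fin d → Fin n, (∏ k, X (r k) k * D (r k)) * (Y.submatrix r id).det := by
        apply Finset.sum_congr rfl
        intro r _
        rw [Matrix.detRowAlternating.toMultilinearMap.map_smul_univ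
          (fun k => X (r k) k * D (r k)) (fun k => (Y (r k) : Fin d → ℝ))]
        rw [smul_eq_mul, hsub r]

lemma prod_ind {n d : ℕ} (S : Finset (Fin n)) (f : Fin d → Fin n) (c : Fin d → ℝ) :
    (∏ k, c k * (if f k ∈ S then (1:ℝ) else 0))
      = if (∀ k, f k ∈ S) then ∏ k, c k else 0 := by
  by_cases h : ∀ k, f k ∈ S
  · rw [if_pos h]; apply Finset.prod_congr rfl; intro k _; rw [if_pos (h k), mul_one]
  · rw [if_neg h]; push_neg at h; obtain ⟨k, hk⟩ := h
    apply Finset.prod_eq_zero (Finset.mem_univ k); rw [if_neg hk, mul_zero]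

lemma card_supersets {n d s : ℕ} (hds : d ≤ s) (T : Finset (Fin n)) (hT : T.card = d) :
    ((Finset.powersetCard s (Finset.univ : Finset (Fin n))).filter (fun S => T ⊆ S)).card
      = (n - d).choose (s - d) := by
  have hcompl : Tᶜ.card = n - d := by
    rw [Finset.card_compl, hT, Fintype.card_fin]
  rw [← hcompl, ← Finset.card_powersetCard (s - d) Tᶜ]
  apply Finset.card_bij' (fun S _ => S \ T) (fun U _ => U ∪ T)
  · intro S hS
    rw [Finset.mem_filter, Finset.mem_powersetCard] at hS
    obtain ⟨⟨_, hcard⟩, hTS⟩ := hS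
    rw [Finset.mem_powersetCard]
    constructor
    · intro x hx
      rw [Finset.mem_sdiff] at hx
      exact Finset.mem_compl.2 hx.2
    · rw [Finset.card_sdiff_of_subset hTS, hcard, hT]
  · intro U hU
    rw [Finset.mem_powersetCard] at hU
    obtain ⟨hUc, hUcard⟩ := hU
    have hdisj : Disjoint U T := by
      rw [Finset.disjoint_left]
      intro x hx
      exact Finset.mem_compl.1 (hUc hx)
    rw [Finset.mem_filter, Finset.mem_powersetCard]
    refine ⟨⟨Finset.subset_univ _, ?_⟩, Finset.subset_union_right⟩
    rw [Finset.card_union_of_disjoint hdisj, hUcard, hT]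
    omega
  · intro S hS
    rw [Finset.mem_filter] at hS
    exact Finset.sdiff_union_of_subset hS.2
  · intro U hU
    rw [Finset.mem_powersetCard] at hU
    have hdisj : Disjoint U T := by
      rw [Finset.disjoint_left]
      intro x hx
      exact Finset.mem_compl.1 (hU.1 hx)
    rw [Finset.union_sdiff_cancel_right hdisj]

lemma key_sum {n d s : ℕ} (hds : d ≤ s) (X Y : Matrix (Fin n) (Fin d) ℝ) :
    ∑ S ∈ Finset.powersetCard s (Finset.univ : Finset (Fin n)), (Xᵀ * sel S * Y).det
      = ((n - d).choose (s - d) : ℝ) * (Xᵀ * Y).det := by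
  classical
  have hexp : ∀ S : Finset (Fin n), (Xᵀ * sel S * Y).det
      = ∑ f : Fin d → Fin n,
          (if (∀ k, f k ∈ S) then (∏ k, X (f k) k) else 0) * (Y.submatrix f id).det := by
    intro S
    rw [sel, det_expand]
    apply Finset.sum_congr rfl
    intro f _
    rw [prod_ind]
  simp only [hexp]
  rw [Finset.sum_comm]
  have hterm : ∀ f : Fin d → Fin n,
      (∑ S ∈ Finset.powersetCard s (Finset.univ : Finset (Fin n)),
        (if (∀ k, f k ∈ S) then (∏ k, X (f k) k) else 0) * (Y.submatrix f id).det)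
      = ((n - d).choose (s - d) : ℝ) * ((∏ k, X (f k) k) * (Y.submatrix f id).det) := by
    intro f
    by_cases hinj : Function.Injective f
    · simp only [ite_mul, zero_mul]
      rw [Finset.sum_ite, Finset.sum_const_zero, add_zero, Finset.sum_const]
      have hfilter : (Finset.powersetCard s (Finset.univ : Finset (Fin n))).filter
            (fun S => ∀ k, f k ∈ S)
          = (Finset.powersetCard s (Finset.univ : Finset (Fin n))).filter
            (fun S => (Finset.univ.image f) ⊆ S) := by
        apply Finset.filter_congr
        intro S _
        simp [Finset.image_subset_iff]
      have hT : (Finset.univ.image f).card = d := by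
        rw [Finset.card_image_of_injective _ hinj, Finset.card_univ, Fintype.card_fin]
      rw [hfilter, card_supersets hds _ hT, nsmul_eq_mul]
    · have hdet : (Y.submatrix f id).det = 0 := by
        rw [Function.not_injective_iff] at hinj
        obtain ⟨a, b, heq, hne⟩ := hinj
        apply Matrix.det_zero_of_row_eq hne
        funext l
        simp [heq]
      simp [hdet]
  rw [Finset.sum_congr rfl (fun f _ => hterm f), ← Finset.mul_sum]
  congr 1
  have h1 : (Xᵀ * Y).det = (Xᵀ * Matrix.diagonal (fun _ : Fin n => (1:ℝ)) * Y).det := by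
    rw [diagonal_one, Matrix.mul_one]
  rw [h1, det_expand]
  apply Finset.sum_congr rfl
  intro f _
  simp

lemma adj_entry {n d : ℕ} (X : Matrix (Fin n) (Fin d) ℝ) (D : Fin n → ℝ)
    (j : Fin d) (i : Fin n) :
    ((Xᵀ * Matrix.diagonal D * X).adjugate * (Xᵀ * Matrix.diagonal D)) j i
      = (Xᵀ * Matrix.diagonal D * (X.updateCol j (Pi.single i 1))).det := by
  have hupdate : Xᵀ * Matrix.diagonal D * (X.updateCol j (Pi.single i 1))
      = (Xᵀ * Matrix.diagonal D * X).updateCol j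
          (fun k => (Xᵀ * Matrix.diagonal D) k i) := by
    ext k l
    by_cases h : l = j
    · subst h
      simp [Matrix.mul_apply, Matrix.updateCol_apply, Pi.single_apply, mul_ite,
        mul_one, mul_zero]
    · simp [Matrix.mul_apply, Matrix.updateCol_apply, h]
  rw [hupdate, ← Matrix.cramer_apply, Matrix.cramer_eq_adjugate_mulVec]
  simp [Matrix.mulVec, dotProduct, Matrix.mul_apply]

lemma T_zero {n d : ℕ} (X : Matrix (Fin n) (Fin d) ℝ) (S : Finset (Fin n))
    (h : (Xᵀ * sel S * X).det = 0) :
    (Xᵀ * sel S * X).adjugate * (Xᵀ * sel S) = 0 := by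
  apply eq_zero_of_mul_transpose_self
  have hP : (Xᵀ * sel S) * (Xᵀ * sel S)ᵀ = Xᵀ * sel S * X := by
    rw [transpose_mul, sel_transpose, transpose_transpose, Matrix.mul_assoc,
      ← Matrix.mul_assoc (sel S), sel_mul_self, ← Matrix.mul_assoc]
  calc (Xᵀ * sel S * X).adjugate * (Xᵀ * sel S)
        * ((Xᵀ * sel S * X).adjugate * (Xᵀ * sel S))ᵀ
      = (Xᵀ * sel S * X).adjugate * ((Xᵀ * sel S) * (Xᵀ * sel S)ᵀ)
          * ((Xᵀ * sel S * X).adjugate)ᵀ := by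
        rw [transpose_mul]
        simp only [Matrix.mul_assoc]
    _ = ((Xᵀ * sel S * X).adjugate * (Xᵀ * sel S * X))
          * ((Xᵀ * sel S * X).adjugate)ᵀ := by rw [hP, ← Matrix.mul_assoc]
    _ = 0 := by rw [Matrix.adjugate_mul, h, zero_smul, Matrix.zero_mul]

/-- Unbiasedness of the pseudoinverse estimator under size-`s` volume sampling:
`E[(I_S X)⁺] = X⁺`. -/
theorem volume_sampling_pinv_unbiased {n d : ℕ} (X : Matrix (Fin n) (Fin d) ℝ)
    (hrank : X.rank = d) (hdn : d ≤ n) (s : ℕ) (hds : d ≤ s) (hsn : s ≤ n) :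
    ∑ S ∈ Finset.powersetCard s (Finset.univ : Finset (Fin n)),
        ((gram X S).det / (((n - d).choose (s - d) : ℝ) * (Xᵀ * X).det)) • pinv (sel S * X)
      = pinv X := by
  classical
  set C : ℝ := ((n - d).choose (s - d) : ℝ) with hC
  have hGrank : (Xᵀ * X).rank = d := by rw [Matrix.rank_transpose_mul_self, hrank]
  have hGunit : IsUnit (Xᵀ * X) := isUnit_of_rank_eq_card _ hGrank
  have hGdet : (Xᵀ * X).det ≠ 0 :=
    isUnit_iff_ne_zero.1 ((Matrix.isUnit_iff_isUnit_det _).1 hGunit)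
  have hCne : C ≠ 0 := by
    have : 0 < (n - d).choose (s - d) := Nat.choose_pos (by omega)
    rw [hC]
    exact_mod_cast this.ne'
  have hterm : ∀ S ∈ Finset.powersetCard s (Finset.univ : Finset (Fin n)),
      ((gram X S).det / (C * (Xᵀ * X).det)) • pinv (sel S * X)
        = (C * (Xᵀ * X).det)⁻¹ • ((Xᵀ * sel S * X).adjugate * (Xᵀ * sel S)) := by
    intro S _
    rw [gram_eq]
    by_cases hdet : (Xᵀ * sel S * X).det = 0
    · rw [hdet, T_zero X S hdet, smul_zero, zero_div, zero_smul]
    · have htr : (sel S * X)ᵀ = Xᵀ * sel S := by rw [transpose_mul, sel_transpose]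
      have hA : (sel S * X)ᵀ * (sel S * X) = Xᵀ * sel S * X := by
        rw [htr]
        calc (Xᵀ * sel S) * (sel S * X) = Xᵀ * (sel S * sel S) * X := by
              simp only [Matrix.mul_assoc]
        _ = Xᵀ * sel S * X := by rw [sel_mul_self]
      have hunit : IsUnit ((sel S * X)ᵀ * (sel S * X)) := by
        rw [hA]
        exact (Matrix.isUnit_iff_isUnit_det _).2 (isUnit_iff_ne_zero.2 hdet)
      rw [pinv_eq (mp_full_rank _ hunit), hA, htr]
      rw [Matrix.inv_def, Ring.inverse_eq_inv, Matrix.smul_mul, smul_smul]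
      congr 1
      field_simp
  rw [Finset.sum_congr rfl hterm, ← Finset.smul_sum]
  have hsum : ∑ S ∈ Finset.powersetCard s (Finset.univ : Finset (Fin n)),
      (Xᵀ * sel S * X).adjugate * (Xᵀ * sel S)
      = C • ((Xᵀ * X).adjugate * Xᵀ) := by
    ext j i
    rw [Matrix.sum_apply]
    have h1 : ∀ S : Finset (Fin n),
        ((Xᵀ * sel S * X).adjugate * (Xᵀ * sel S)) j i
          = (Xᵀ * sel S * (X.updateCol j (Pi.single i 1))).det := by
      intro S
      rw [sel]
      exact adj_entry X _ j i
    rw [Finset.sum_congr rfl (fun S _ => h1 S), key_sum hds]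
    have h2 : ((Xᵀ * X).adjugate * Xᵀ) j i
        = (Xᵀ * (X.updateCol j (Pi.single i 1))).det := by
      have := adj_entry X (fun _ => (1:ℝ)) j i
      simpa [Matrix.diagonal_one, Matrix.mul_one] using this
    rw [Matrix.smul_apply, h2, smul_eq_mul]
  rw [hsum, pinv_eq (mp_full_rank X hGunit)]
  rw [Matrix.inv_def, Ring.inverse_eq_inv, Matrix.smul_mul, smul_smul]
  congr 1
  field_simp
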